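/- Let Q be a quadratic module on ℝ[X₁,…,Xₙ]. Then Q is Archimedean if and only if there exists λ > 0 such that λ − (X₁² + ⋯ + Xₙ²) ∈ Q. -/

import Mathlib

open MvPolynomial Matrix Finset

abbrev PolyMat (n t : ℕ) := Matrix (Fin t) (Fin t) (MvPolynomial (Fin n) ℝ)

noncomputable def evalMat {n t : ℕ} (x : Fin n → ℝ) (A : PolyMat n t) :
    Matrix (Fin t) (Fin t) ℝ :=
  A.map (MvPolynomial.eval x)

def IsMatQuadraticModule {n t : ℕ} (Q : Set (PolyMat n t)) : Prop :=
  (1 : PolyMat n t) ∈ Q ∧ (∀ F G, F ∈ Q → G ∈ Q → F + G ∈ Q) ∧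
    (∀ (A F : PolyMat n t), F ∈ Q → Aᵀ * F * A ∈ Q)

def MatArchimedean {n t : ℕ} (Q : Set (PolyMat n t)) : Prop :=
  ∀ F : PolyMat n t, F.IsSymm → ∃ l : ℝ, 0 < l ∧
    (l • (1 : PolyMat n t) + F ∈ Q ∧ l • (1 : PolyMat n t) - F ∈ Q)

def KMat {n t : ℕ} (Q : Set (PolyMat n t)) : Set (Fin n → ℝ) :=
  {x | ∀ G ∈ Q, (evalMat x G).PosSemidef}

def KSet {n : ℕ} (G : Set (MvPolynomial (Fin n) ℝ)) : Set (Fin n → ℝ) :=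
  {x | ∀ g ∈ G, 0 ≤ MvPolynomial.eval x g}

def IsQuadraticModule {n : ℕ} (M : Set (MvPolynomial (Fin n) ℝ)) : Prop :=
  (1 : MvPolynomial (Fin n) ℝ) ∈ M ∧ (∀ f g, f ∈ M → g ∈ M → f + g ∈ M) ∧
    ∀ (a f : MvPolynomial (Fin n) ℝ), f ∈ M → a ^ 2 * f ∈ M

def IsSemiringCone {n : ℕ} (M : Set (MvPolynomial (Fin n) ℝ)) : Prop :=
  (∀ f g, f ∈ M → g ∈ M → f + g ∈ M) ∧ (∀ f g, f ∈ M → g ∈ M → f * g ∈ M) ∧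
    ∀ r : ℝ, 0 ≤ r → MvPolynomial.C r ∈ M

def IsScalarArchimedean {n : ℕ} (M : Set (MvPolynomial (Fin n) ℝ)) : Prop :=
  ∀ f : MvPolynomial (Fin n) ℝ, ∃ l : ℝ, 0 < l ∧
    (MvPolynomial.C l + f ∈ M ∧ MvPolynomial.C l - f ∈ M)

def QM {n : ℕ} (G : Set (MvPolynomial (Fin n) ℝ)) : Set (MvPolynomial (Fin n) ℝ) :=
  ⋂₀ {M | IsQuadraticModule M ∧ G ⊆ M}

def SR {n : ℕ} (G : Set (MvPolynomial (Fin n) ℝ)) : Set (MvPolynomial (Fin n) ℝ) :=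
  ⋂₀ {M | IsSemiringCone M ∧ G ⊆ M}

def MatQM {n t : ℕ} (𝒢 : Set (PolyMat n t)) : Set (PolyMat n t) :=
  ⋂₀ {Q | IsMatQuadraticModule Q ∧ 𝒢 ⊆ Q}

def liftT {n : ℕ} (M : Set (MvPolynomial (Fin n) ℝ)) (t : ℕ) : Set (PolyMat n t) :=
  {F | ∃ (k : ℕ) (m : Fin k → MvPolynomial (Fin n) ℝ) (A : Fin k → PolyMat n t),
    (∀ i, m i ∈ M) ∧ F = ∑ i, m i • ((A i)ᵀ * A i)}

def P0 {n : ℕ} : Set (MvPolynomial (Fin n) ℝ) := {p | ∀ s, 0 ≤ p.coeff s}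


section Helpers

variable {n : ℕ} {Q : Set (MvPolynomial (Fin n) ℝ)}

lemma qm_sq_mem (hQ : IsQuadraticModule Q) (f : MvPolynomial (Fin n) ℝ) : f ^ 2 ∈ Q := by
  simpa using hQ.2.2 f 1 hQ.1

lemma qm_zero_mem (hQ : IsQuadraticModule Q) : (0 : MvPolynomial (Fin n) ℝ) ∈ Q := by
  simpa using hQ.2.2 0 1 hQ.1

lemma qm_C_mul_mem (hQ : IsQuadraticModule Q) {r : ℝ} (hr : 0 ≤ r)
    {f : MvPolynomial (Fin n) ℝ} (hf : f ∈ Q) : MvPolynomial.C r * f ∈ Q := by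
  have h := hQ.2.2 (MvPolynomial.C (Real.sqrt r)) f hf
  rwa [← _root_.map_pow, Real.sq_sqrt hr] at h

lemma qm_C_mem (hQ : IsQuadraticModule Q) {r : ℝ} (hr : 0 ≤ r) :
    (MvPolynomial.C r : MvPolynomial (Fin n) ℝ) ∈ Q := by
  simpa using qm_C_mul_mem hQ hr hQ.1

lemma qm_sum_mem (hQ : IsQuadraticModule Q) {ι : Type*} (s : Finset ι)
    (p : ι → MvPolynomial (Fin n) ℝ) (hp : ∀ i ∈ s, p i ∈ Q) : ∑ i ∈ s, p i ∈ Q := by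
  classical
  induction s using Finset.induction_on with
  | empty => simpa using qm_zero_mem hQ
  | insert x s hx ih =>
    rw [Finset.sum_insert hx]
    exact hQ.2.1 _ _ (hp _ (Finset.mem_insert_self _ _))
      (ih fun i hi => hp i (Finset.mem_insert_of_mem hi))

lemma poly_C_half_mul_two :
    MvPolynomial.C (1 / 2 : ℝ) * 2 = (1 : MvPolynomial (Fin n) ℝ) := by
  have h2 := MvPolynomial.C_eq_coe_nat (σ := Fin n) (R := ℝ) 2
  push_cast at h2
  rw [← h2, ← MvPolynomial.C_mul]
  norm_num

/-- The set of "bounded" elements. -/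
def Bnd (Q : Set (MvPolynomial (Fin n) ℝ)) : Set (MvPolynomial (Fin n) ℝ) :=
  {f | ∃ l : ℝ, 0 < l ∧ (MvPolynomial.C l + f ∈ Q ∧ MvPolynomial.C l - f ∈ Q)}

lemma bnd_C (hQ : IsQuadraticModule Q) (a : ℝ) :
    (MvPolynomial.C a : MvPolynomial (Fin n) ℝ) ∈ Bnd Q := by
  refine ⟨|a| + 1, by positivity, ?_, ?_⟩
  · rw [← _root_.map_add]
    exact qm_C_mem hQ (by have := abs_nonneg a; have := neg_abs_le a; linarith)
  · rw [← _root_.map_sub]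
    exact qm_C_mem hQ (by have := le_abs_self a; linarith)

lemma bnd_neg (hf : f ∈ Bnd Q) : -f ∈ Bnd Q := by
  obtain ⟨l, hl, h1, h2⟩ := hf
  exact ⟨l, hl, by simpa [sub_eq_add_neg] using h2, by simpa [sub_eq_add_neg] using h1⟩

lemma bnd_add (hQ : IsQuadraticModule Q) {f g : MvPolynomial (Fin n) ℝ}
    (hf : f ∈ Bnd Q) (hg : g ∈ Bnd Q) : f + g ∈ Bnd Q := by
  obtain ⟨l, hl, h1, h2⟩ := hf
  obtain ⟨m, hm, h3, h4⟩ := hg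
  refine ⟨l + m, by linarith, ?_, ?_⟩
  · have := hQ.2.1 _ _ h1 h3
    rw [show MvPolynomial.C (l + m) + (f + g) =
      (MvPolynomial.C l + f) + (MvPolynomial.C m + g) by rw [_root_.map_add]; ring]
    exact this
  · have := hQ.2.1 _ _ h2 h4
    rw [show MvPolynomial.C (l + m) - (f + g) =
      (MvPolynomial.C l - f) + (MvPolynomial.C m - g) by rw [_root_.map_add]; ring]
    exact this

lemma bnd_sq (hQ : IsQuadraticModule Q) {f : MvPolynomial (Fin n) ℝ}
    (hf : f ∈ Bnd Q) : f ^ 2 ∈ Bnd Q := by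
  obtain ⟨l, hl, h1, h2⟩ := hf
  refine ⟨l ^ 2, by positivity, ?_, ?_⟩
  · rw [show MvPolynomial.C (l ^ 2) + f ^ 2 = MvPolynomial.C (l ^ 2) + f ^ 2 from rfl]
    exact hQ.2.1 _ _ (qm_C_mem hQ (by positivity)) (qm_sq_mem hQ f)
  · have hs : (MvPolynomial.C l + f) ^ 2 * (MvPolynomial.C l - f)
        + (MvPolynomial.C l - f) ^ 2 * (MvPolynomial.C l + f) ∈ Q :=
      hQ.2.1 _ _ (hQ.2.2 _ _ h2) (hQ.2.2 _ _ h1)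
    have hmul := qm_C_mul_mem hQ (r := (2 * l)⁻¹) (by positivity) hs
    have key : MvPolynomial.C (2 * l)⁻¹ *
        ((MvPolynomial.C l + f) ^ 2 * (MvPolynomial.C l - f)
          + (MvPolynomial.C l - f) ^ 2 * (MvPolynomial.C l + f))
        = MvPolynomial.C (l ^ 2) - f ^ 2 := by
      have e1 : (MvPolynomial.C l + f) ^ 2 * (MvPolynomial.C l - f)
          + (MvPolynomial.C l - f) ^ 2 * (MvPolynomial.C l + f)
          = (MvPolynomial.C (2 * l)) * ((MvPolynomial.C l) ^ 2 - f ^ 2) := by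
        rw [MvPolynomial.C_mul, _root_.map_ofNat]
        ring
      rw [e1, ← mul_assoc, ← _root_.map_mul, inv_mul_cancel₀ (by positivity : (2 * l : ℝ) ≠ 0),
        _root_.map_one, one_mul, _root_.map_pow]
    rwa [key] at hmul

lemma bnd_C_mul_nonneg (hQ : IsQuadraticModule Q) {c : ℝ} (hc : 0 ≤ c)
    {f : MvPolynomial (Fin n) ℝ}
    (hf : f ∈ Bnd Q) : MvPolynomial.C c * f ∈ Bnd Q := by
  obtain ⟨l, hl, h1, h2⟩ := hf
  refine ⟨c * l + 1, by positivity, ?_, ?_⟩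
  · have := hQ.2.1 _ _ (qm_C_mul_mem hQ hc h1) hQ.1
    rw [show MvPolynomial.C (c * l + 1) + MvPolynomial.C c * f =
      MvPolynomial.C c * (MvPolynomial.C l + f) + 1 by
        rw [_root_.map_add, _root_.map_mul, _root_.map_one]; ring]
    exact this
  · have := hQ.2.1 _ _ (qm_C_mul_mem hQ hc h2) hQ.1
    rw [show MvPolynomial.C (c * l + 1) - MvPolynomial.C c * f =
      MvPolynomial.C c * (MvPolynomial.C l - f) + 1 by
        rw [_root_.map_add, _root_.map_mul, _root_.map_one]; ring]
    exact this

lemma bnd_C_mul (hQ : IsQuadraticModule Q) (c : ℝ) {f : MvPolynomial (Fin n) ℝ}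
    (hf : f ∈ Bnd Q) : MvPolynomial.C c * f ∈ Bnd Q := by
  rcases le_or_gt 0 c with hc | hc
  · exact bnd_C_mul_nonneg hQ hc hf
  · have h := bnd_C_mul_nonneg hQ (c := -c) (by linarith) (bnd_neg hf)
    rw [show MvPolynomial.C (-c) * -f = MvPolynomial.C c * f by
      rw [_root_.map_neg]; ring] at h
    exact h

lemma bnd_mul (hQ : IsQuadraticModule Q) {f g : MvPolynomial (Fin n) ℝ}
    (hf : f ∈ Bnd Q) (hg : g ∈ Bnd Q) : f * g ∈ Bnd Q := by
  have h1 : (f + g) ^ 2 ∈ Bnd Q := bnd_sq hQ (bnd_add hQ hf hg)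
  have h2 : (f + -g) ^ 2 ∈ Bnd Q := bnd_sq hQ (bnd_add hQ hf (bnd_neg hg))
  have h3 : (f + g) ^ 2 + -((f + -g) ^ 2) ∈ Bnd Q := bnd_add hQ h1 (bnd_neg h2)
  have h4 := bnd_C_mul hQ (1 / 4 : ℝ) h3
  rw [show MvPolynomial.C (1 / 4 : ℝ) * ((f + g) ^ 2 + -((f + -g) ^ 2)) = f * g by
    rw [show ((f + g) ^ 2 + -((f + -g) ^ 2)) = 4 * (f * g) by ring]
    rw [show (4 : MvPolynomial (Fin n) ℝ) = MvPolynomial.C (4 : ℝ) by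
      have h4 := MvPolynomial.C_eq_coe_nat (σ := Fin n) (R := ℝ) 4
      push_cast at h4
      rw [h4]]
    rw [← mul_assoc, ← _root_.map_mul]
    norm_num] at h4
  exact h4

end Helpers

/-- A quadratic module is Archimedean iff `λ − (X₁² + ⋯ + Xₙ²) ∈ Q` for some `λ > 0`. -/
theorem quadraticModule_archimedean_iff_sum_sq {n : ℕ} (Q : Set (MvPolynomial (Fin n) ℝ))
    (hQ : IsQuadraticModule Q) :
    IsScalarArchimedean Q ↔ ∃ l : ℝ, 0 < l ∧
      MvPolynomial.C l - ∑ i : Fin n, MvPolynomial.X i ^ 2 ∈ Q := by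
  classical
  constructor
  · intro h
    obtain ⟨l, hl, _, h2⟩ := h (∑ i : Fin n, MvPolynomial.X i ^ 2)
    exact ⟨l, hl, h2⟩
  · rintro ⟨l, hl, hmem⟩
    have hXsq : ∀ i : Fin n, MvPolynomial.C l - MvPolynomial.X i ^ 2 ∈ Q := by
      intro i
      have hrest : ∑ j ∈ Finset.univ.erase i, (MvPolynomial.X j ^ 2 :
          MvPolynomial (Fin n) ℝ) ∈ Q :=
        qm_sum_mem hQ _ _ (fun j _ => qm_sq_mem hQ _)
      have hsplit : (∑ j : Fin n, (MvPolynomial.X j : MvPolynomial (Fin n) ℝ) ^ 2)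
          = MvPolynomial.X i ^ 2 + ∑ j ∈ Finset.univ.erase i, MvPolynomial.X j ^ 2 :=
        (Finset.add_sum_erase _ _ (Finset.mem_univ i)).symm
      have := hQ.2.1 _ _ hmem hrest
      rw [show MvPolynomial.C l - MvPolynomial.X i ^ 2 =
        (MvPolynomial.C l - ∑ j : Fin n, MvPolynomial.X j ^ 2)
          + ∑ j ∈ Finset.univ.erase i, MvPolynomial.X j ^ 2 by rw [hsplit]; ring]
      exact this
    have hX : ∀ i : Fin n, (MvPolynomial.X i : MvPolynomial (Fin n) ℝ) ∈ Bnd Q := by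
      intro i
      refine ⟨(l + 1) / 2, by positivity, ?_, ?_⟩
      · have hm : (MvPolynomial.X i + 1) ^ 2 + (MvPolynomial.C l -
            MvPolynomial.X i ^ 2) ∈ Q := hQ.2.1 _ _ (qm_sq_mem hQ _) (hXsq i)
        have h := qm_C_mul_mem hQ (r := (1 / 2 : ℝ)) (by norm_num) hm
        rw [show MvPolynomial.C (1 / 2 : ℝ) * ((MvPolynomial.X i + 1) ^ 2 +
            (MvPolynomial.C l - MvPolynomial.X i ^ 2)) =
            MvPolynomial.C ((l + 1) / 2) + MvPolynomial.X i by
          rw [show ((l + 1) / 2 : ℝ) = (1 / 2) * (l + 1) by ring, _root_.map_mul, _root_.map_add, _root_.map_one]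
          linear_combination (MvPolynomial.X i : MvPolynomial (Fin n) ℝ) *
            poly_C_half_mul_two] at h
        exact h
      · have hm : (MvPolynomial.X i - 1) ^ 2 + (MvPolynomial.C l -
            MvPolynomial.X i ^ 2) ∈ Q := hQ.2.1 _ _ (qm_sq_mem hQ _) (hXsq i)
        have h := qm_C_mul_mem hQ (r := (1 / 2 : ℝ)) (by norm_num) hm
        rw [show MvPolynomial.C (1 / 2 : ℝ) * ((MvPolynomial.X i - 1) ^ 2 +
            (MvPolynomial.C l - MvPolynomial.X i ^ 2)) =
            MvPolynomial.C ((l + 1) / 2) - MvPolynomial.X i by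
          rw [show ((l + 1) / 2 : ℝ) = (1 / 2) * (l + 1) by ring, _root_.map_mul, _root_.map_add, _root_.map_one]
          linear_combination (-(MvPolynomial.X i) : MvPolynomial (Fin n) ℝ) *
            poly_C_half_mul_two] at h
        exact h
    intro f
    suffices h : f ∈ Bnd Q from h
    induction f using MvPolynomial.induction_on with
    | C a => exact bnd_C hQ a
    | add p q hp hq => exact bnd_add hQ hp hq
    | mul_X p i hp => exact bnd_mul hQ hp (hX i)
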